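/- In the simplicial complex M_6 generated by the difference 5-cycles (1,1,2,1,7), (1,4,3,2,2), (1,2,2,3,4), (1,1,7,1,2), (1,1,2,5,3), (1,1,3,5,2) on ZMod 12, the triple {0, 4, 8} is not a face; hence M_6 does not contain the full 2-skeleton of the 6-cross-polytope with antipodal pairs {j, j+6}, even though {0,4,8} contains no antipodal pair. -/
import Mathlib
set_option maxRecDepth 100000


/-- The orbit of facets generated by a difference 5-cycle with partial sums
0, a, b, c, d. -/
def orbit18 (a b c d : ZMod 12) : Finset (Finset (ZMod 12)) :=
  Finset.univ.image (fun x : ZMod 12 =>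
    ({x, x + a, x + b, x + c, x + d} : Finset (ZMod 12)))

/-- Facets of M₆: difference 5-cycles (1,1,2,1,7), (1,4,3,2,2), (1,2,2,3,4),
(1,1,7,1,2), (1,1,2,5,3), (1,1,3,5,2). -/
def M6facets : Finset (Finset (ZMod 12)) :=
  orbit18 1 2 4 5 ∪ orbit18 1 5 8 10 ∪ orbit18 1 3 5 8 ∪
  orbit18 1 2 9 10 ∪ orbit18 1 2 4 9 ∪ orbit18 1 2 5 10

/-- {0,4,8} contains no antipodal pair but is not a face of M₆, so M₆ does not
contain the full 2-skeleton of the 6-cross-polytope. -/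
theorem stmt_18 :
    (¬ ∃ F ∈ M6facets, ({0, 4, 8} : Finset (ZMod 12)) ⊆ F) ∧
    (∀ x ∈ ({0, 4, 8} : Finset (ZMod 12)), x + 6 ∉ ({0, 4, 8} : Finset (ZMod 12))) ∧
    ¬ (∀ s : Finset (ZMod 12), s.card ≤ 3 → (∀ x ∈ s, x + 6 ∉ s) →
        ∃ F ∈ M6facets, s ⊆ F) := by
  refine ⟨by decide, by decide, fun h => ?_⟩
  exact absurd (h {0,4,8} (by decide) (by decide)) (by decide)
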